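/- Final-stage observed-data decomposition under Conditions 1–3 (base case of the consistency proof): Let H : Ω → ℝ^d be the true history, A the true treatment indicator, A* the prescribed treatment indicator, and H* : Ω → ℝ^m the observed history with σ(H*) ⊆ σ(H, A*). Let Y be integrable with E[Y | σ(H, A)] = ν(H) + A·C(H) μ-a.e. for Borel ν, C : ℝ^d → ℝ with ν(H) integrable and C bounded. Assume: Condition 1, E[Y | σ(H, A, A*)] = E[Y | σ(H, A)] μ-a.e.; Condition 2, E[ν(H) | σ(H*, A*)] = E[ν(H) | σ(H*)] μ-a.e.; and Condition 3 (conditional mean independence of the contrast from the true treatment), E[A·C(H) | σ(H*, A*)] = E[A | σ(H*, A*)]·E[C(H) | σ(H*, A*)] μ-a.e. Then E[Y | σ(H*, A*)] = E[ν(H) | σ(H*)] + E[A | σ(H*, A*)]·E[C(H) | σ(H*, A*)] μ-a.e.; that is, E[Y | σ(H*, A*)] = ν*(H*) + π*(H*, A*)·C*(H*) with ν* = E[ν(H) | σ(H*)], π* = P(A = 1 | σ(H*, A*)) and C* = E[C(H) | σ(H*, A*)]. -/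

import Mathlib

open MeasureTheory

private theorem condExp_tower_add_aux {Ω : Type*} {m0 : MeasurableSpace Ω}
    (μ : Measure Ω) [IsProbabilityMeasure μ]
    (mG m3 : MeasurableSpace Ω) (hle1 : mG ≤ m3) (hle2 : m3 ≤ m0)
    (Y f g f' g' : Ω → ℝ)
    (hf : Integrable f μ) (hg : Integrable g μ)
    (h13 : μ[Y|m3] =ᵐ[μ] fun ω => f ω + g ω)
    (h2 : μ[f|mG] =ᵐ[μ] f') (h3 : μ[g|mG] =ᵐ[μ] g') :
    μ[Y|mG] =ᵐ[μ] fun ω => f' ω + g' ω := by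
  have step1 : μ[Y|mG] =ᵐ[μ] μ[μ[Y|m3]|mG] :=
    (condExp_condExp_of_le hle1 hle2).symm
  have step2 : μ[μ[Y|m3]|mG] =ᵐ[μ] μ[fun ω => f ω + g ω|mG] := condExp_congr_ae h13
  have step3 : μ[fun ω => f ω + g ω|mG] =ᵐ[μ] μ[f|mG] + μ[g|mG] := condExp_add hf hg mG
  refine ((step1.trans step2).trans step3).trans ?_
  filter_upwards [h2, h3] with ω hh2 hh3
  simp only [Pi.add_apply]
  rw [hh2, hh3]


/-- Final-stage observed-data decomposition under Conditions 1–3: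
`E[Y | σ(H*, A*)] = ν*(H*) + π*(H*, A*)·C*(H*)` with `ν* = E[ν(H) | σ(H*)]`,
`π* = P(A = 1 | σ(H*, A*)) = E[A | σ(H*, A*)]` and `C* = E[C(H) | σ(H*, A*)]`. -/
theorem final_stage_observed_data_decomposition
    {Ω : Type*} [MeasurableSpace Ω] (μ : Measure Ω) [IsProbabilityMeasure μ]
    {d m : ℕ} (H : Ω → (Fin d → ℝ)) (hH : Measurable H)
    (A Astar : Ω → ℝ) (hA : Measurable A) (hAstar : Measurable Astar)
    (hA01 : ∀ ω, A ω = 0 ∨ A ω = 1) (hAstar01 : ∀ ω, Astar ω = 0 ∨ Astar ω = 1)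
    (Hstar : Ω → (Fin m → ℝ)) (hHstar : Measurable Hstar)
    (hHstar_sub : MeasurableSpace.comap Hstar inferInstance ≤
      MeasurableSpace.comap (fun ω => (H ω, Astar ω)) inferInstance)
    (Y : Ω → ℝ) (hY : Integrable Y μ)
    (ν C : (Fin d → ℝ) → ℝ) (hν : Measurable ν) (hC : Measurable C)
    (hνint : Integrable (fun ω => ν (H ω)) μ)
    (hCbdd : ∃ M, ∀ x, |C x| ≤ M)
    (hblip : μ[Y | MeasurableSpace.comap (fun ω => (H ω, A ω)) inferInstance]
      =ᵐ[μ] fun ω => ν (H ω) + A ω * C (H ω))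
    (hcond1 : μ[Y | MeasurableSpace.comap (fun ω => (H ω, A ω, Astar ω)) inferInstance]
      =ᵐ[μ] μ[Y | MeasurableSpace.comap (fun ω => (H ω, A ω)) inferInstance])
    (hcond2 : μ[fun ω => ν (H ω) |
          MeasurableSpace.comap (fun ω => (Hstar ω, Astar ω)) inferInstance]
      =ᵐ[μ] μ[fun ω => ν (H ω) | MeasurableSpace.comap Hstar inferInstance])
    (hcond3 : μ[fun ω => A ω * C (H ω) |
          MeasurableSpace.comap (fun ω => (Hstar ω, Astar ω)) inferInstance]
      =ᵐ[μ] fun ω =>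
        (μ[A | MeasurableSpace.comap (fun ω' => (Hstar ω', Astar ω')) inferInstance]) ω
        * (μ[fun ω' => C (H ω') |
            MeasurableSpace.comap (fun ω' => (Hstar ω', Astar ω')) inferInstance]) ω) :
    μ[Y | MeasurableSpace.comap (fun ω => (Hstar ω, Astar ω)) inferInstance]
      =ᵐ[μ] fun ω =>
        (μ[fun ω' => ν (H ω') | MeasurableSpace.comap Hstar inferInstance]) ω
        + (μ[A | MeasurableSpace.comap (fun ω' => (Hstar ω', Astar ω')) inferInstance]) ω
        * (μ[fun ω' => C (H ω') |
            MeasurableSpace.comap (fun ω' => (Hstar ω', Astar ω')) inferInstance]) ω := by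
  -- integrability of A * C(H)
  obtain ⟨M, hM⟩ := hCbdd
  have hACint : Integrable (fun ω => A ω * C (H ω)) μ := by
    refine Integrable.mono' (integrable_const M) ((hA.mul (hC.comp hH)).aestronglyMeasurable) ?_
    filter_upwards with ω
    rw [Real.norm_eq_abs, abs_mul]
    rcases hA01 ω with h | h <;> simp [h]
    · exact le_trans (abs_nonneg _) (hM (H ω))
    · exact hM (H ω)
  have hmeas3 : Measurable (fun ω => (H ω, A ω, Astar ω)) := hH.prodMk (hA.prodMk hAstar)
  have hHA' : MeasurableSpace.comap (fun ω => (H ω, Astar ω)) inferInstance ≤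
      MeasurableSpace.comap (fun ω => (H ω, A ω, Astar ω)) inferInstance := by
    have heq : (fun ω => (H ω, Astar ω)) =
        (fun p : (Fin d → ℝ) × ℝ × ℝ => (p.1, p.2.2)) ∘ (fun ω => (H ω, A ω, Astar ω)) := rfl
    rw [heq, ← MeasurableSpace.comap_comp]
    exact MeasurableSpace.comap_mono
      (measurable_iff_comap_le.mp (measurable_fst.prodMk measurable_snd.snd))
  have hAs' : MeasurableSpace.comap Astar inferInstance ≤
      MeasurableSpace.comap (fun ω => (H ω, A ω, Astar ω)) inferInstance := by
    have heq : Astar =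
        (fun p : (Fin d → ℝ) × ℝ × ℝ => p.2.2) ∘ (fun ω => (H ω, A ω, Astar ω)) := rfl
    rw [heq, ← MeasurableSpace.comap_comp]
    exact MeasurableSpace.comap_mono (measurable_iff_comap_le.mp measurable_snd.snd)
  refine condExp_tower_add_aux μ _ _ ?_ (measurable_iff_comap_le.mp hmeas3)
    Y _ _ _ _ hνint hACint (hcond1.trans hblip) hcond2 hcond3
  -- mG ≤ m3
  refine measurable_iff_comap_le.mp (Measurable.prodMk ?_ ?_)
  · exact measurable_iff_comap_le.mpr (hHstar_sub.trans hHA')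
  · exact measurable_iff_comap_le.mpr hAs'
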